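/- Let (Ω, F, (Fₙ), P) be a discrete-time filtered probability space and let V : ℕ → Ω → ℝ be an adapted nondecreasing integrable process with V₀ = 0, with predictable compensator Ṽ (so Ṽₙ = ∑_{k<n} E[V_{k+1} − V_k | F_k]). Then for every p ∈ [1, ∞), ‖Ṽ_∞‖_{L_p} ≤ p ‖V_∞‖_{L_p}. -/

import Mathlib

open MeasureTheory Finset
open scoped ENNReal NNReal


lemma my_rpow_sub_rpow_le {p x y : ℝ} (hp : 1 ≤ p) (hx : 0 ≤ x) (hxy : x ≤ y) :
    y ^ p - x ^ p ≤ p * ((y - x) * y ^ (p - 1)) := by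
  rcases eq_or_lt_of_le hxy with rfl | hlt
  · simp
  have hy : 0 ≤ y := hx.trans hxy
  obtain ⟨c, hc, hceq⟩ := exists_hasDerivAt_eq_slope (fun t => t ^ p)
    (fun t => p * t ^ (p - 1)) hlt
    ((Real.continuous_rpow_const (by linarith)).continuousOn)
    (fun t _ => Real.hasDerivAt_rpow_const (Or.inr hp))
  have hc0 : 0 ≤ c := (hx.trans_lt hc.1).le
  have heq : y ^ p - x ^ p = p * c ^ (p - 1) * (y - x) := by
    rw [hceq, div_mul_cancel₀]
    exact sub_ne_zero.2 hlt.ne'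
  rw [heq]
  have hcy : c ^ (p - 1) ≤ y ^ (p - 1) :=
    Real.rpow_le_rpow hc0 hc.2.le (by linarith)
  have hp0 : (0:ℝ) ≤ p := by linarith
  calc p * c ^ (p - 1) * (y - x) ≤ p * y ^ (p - 1) * (y - x) := by
        apply mul_le_mul_of_nonneg_right _ (sub_nonneg.2 hxy)
        exact mul_le_mul_of_nonneg_left hcy hp0
    _ = p * ((y - x) * y ^ (p - 1)) := by ring

lemma my_seq_rpow_le {p : ℝ} (hp : 1 ≤ p) (b : ℕ → ℝ) (h0 : b 0 = 0)
    (hmono : ∀ k, b k ≤ b (k + 1)) (n : ℕ) :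
    b n ^ p ≤ p * ∑ k ∈ Finset.range n, (b (k + 1) - b k) * b (k + 1) ^ (p - 1) := by
  have hmono' : Monotone b := monotone_nat_of_le_succ hmono
  have hb : ∀ k, 0 ≤ b k := fun k => h0 ▸ hmono' (Nat.zero_le k)
  have hsum : b n ^ p = ∑ k ∈ Finset.range n, (b (k + 1) ^ p - b k ^ p) := by
    rw [Finset.sum_range_sub (fun k => b k ^ p), h0, Real.zero_rpow (by positivity), sub_zero]
  rw [hsum, Finset.mul_sum]
  exact Finset.sum_le_sum fun k _ => my_rpow_sub_rpow_le hp (hb k) (hmono k)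

lemma my_clamp_sub_le {x y M : ℝ} (hxy : x ≤ y) :
    min (max y 0) M - min (max x 0) M ≤ y - x := by
  simp only [min_def, max_def]
  split_ifs <;> linarith

/-- Discrete-time compensator estimate: if `V` is adapted, nondecreasing, integrable with
`V 0 = 0` and `Ṽ n = ∑_{k<n} E[V (k+1) - V k | 𝒢 k]` is its predictable compensator, then
`‖Ṽ n‖_{L_p} ≤ p ‖V n‖_{L_p}` for every `p ∈ [1, ∞)` and every time `n`. -/
theorem stmt_9 {Ω : Type*} {mΩ : MeasurableSpace Ω} {μ : Measure Ω} [IsProbabilityMeasure μ]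
    (𝒢 : Filtration ℕ mΩ) (V Vt : ℕ → Ω → ℝ)
    (hadp : Adapted 𝒢 V) (hmono : ∀ ω, Monotone fun n => V n ω) (h0 : V 0 = 0)
    (hint : ∀ n, Integrable (V n) μ)
    (hVt : ∀ n ω, Vt n ω = ∑ k ∈ Finset.range n,
      (μ[(fun ω' => V (k + 1) ω' - V k ω') | 𝒢 k]) ω)
    (p : ℝ) (hp : 1 ≤ p) (n : ℕ) :
    eLpNorm (Vt n) (ENNReal.ofReal p) μ ≤ ENNReal.ofReal p * eLpNorm (V n) (ENNReal.ofReal p) μ := by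
  classical
  set d : ℕ → Ω → ℝ := fun k ω' => V (k + 1) ω' - V k ω' with hd_def
  set g : ℕ → Ω → ℝ := fun k => μ[d k | 𝒢 k] with hg_def
  have hVt' : ∀ m ω, Vt m ω = ∑ k ∈ Finset.range m, g k ω := hVt
  have hd_int : ∀ k, Integrable (d k) μ := fun k => (hint (k + 1)).sub (hint k)
  have hd_nonneg : ∀ k ω, 0 ≤ d k ω := fun k ω => sub_nonneg.2 (hmono ω (Nat.le_succ k))
  have hg_int : ∀ k, Integrable (g k) μ := fun k => integrable_condExp
  have hg_meas : ∀ k, StronglyMeasurable[𝒢 k] (g k) := fun k => stronglyMeasurable_condExp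
  have hg_nonneg : ∀ k, 0 ≤ᵐ[μ] g k := fun k =>
    condExp_nonneg (Filter.Eventually.of_forall (hd_nonneg k))
  have hVn_nonneg : ∀ ω, 0 ≤ V n ω := fun ω => by
    have := hmono ω (Nat.zero_le n); simpa [h0] using this
  have hVt_int : ∀ m, Integrable (Vt m) μ := by
    intro m
    rw [funext (hVt' m)]
    exact integrable_finset_sum _ fun k _ => integrable_condExp
  have hVt_sm : ∀ m, StronglyMeasurable (Vt m) := by
    intro m
    rw [funext (hVt' m)]
    exact Finset.stronglyMeasurable_fun_sum _ fun k _ => (hg_meas k).mono (𝒢.le k)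
  have hVt_sm' : ∀ k, StronglyMeasurable[𝒢 k] (Vt (k + 1)) := by
    intro k
    rw [funext (hVt' (k + 1))]
    exact Finset.stronglyMeasurable_fun_sum _ fun j hj =>
      (hg_meas j).mono (𝒢.mono (Nat.lt_succ_iff.mp (Finset.mem_range.mp hj)))
  have hVt0 : ∀ ω, Vt 0 ω = 0 := fun ω => by simp [hVt' 0 ω]
  have hdiff : ∀ k ω, Vt (k + 1) ω - Vt k ω = g k ω := fun k ω => by
    rw [hVt' (k + 1) ω, hVt' k ω, Finset.sum_range_succ]; ring
  have hgood : ∀ᵐ ω ∂μ, ∀ k, 0 ≤ g k ω := ae_all_iff.2 hg_nonneg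
  have hVt_mono : ∀ᵐ ω ∂μ, ∀ j k, j ≤ k → Vt j ω ≤ Vt k ω := by
    filter_upwards [hgood] with ω hω
    intro j k hjk
    have key : ∀ m, Vt m ω ≤ Vt (m + 1) ω := fun m => by
      have := hdiff m ω; have := hω m; linarith
    exact monotone_nat_of_le_succ key hjk
  have hVt_nonneg : ∀ᵐ ω ∂μ, 0 ≤ Vt n ω := by
    filter_upwards [hVt_mono] with ω hω
    have := hω 0 n (Nat.zero_le n); rwa [hVt0 ω] at this
  have hsum_int : ∀ m, ∫ ω, Vt m ω ∂μ = ∫ ω, V m ω ∂μ := by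
    intro m
    rw [funext (hVt' m), integral_finset_sum _ fun k _ => hg_int k]
    have hterm : ∀ k ∈ Finset.range m, ∫ ω, g k ω ∂μ = ∫ ω, d k ω ∂μ := fun k _ =>
      integral_condExp (𝒢.le k)
    rw [Finset.sum_congr rfl hterm, ← integral_finset_sum _ fun k _ => hd_int k]
    refine integral_congr_ae (Filter.Eventually.of_forall fun ω => ?_)
    show ∑ k ∈ Finset.range m, (V (k + 1) ω - V k ω) = V m ω
    rw [Finset.sum_range_sub (fun k => V k ω)]
    simp [congrFun h0 ω]
  rcases eq_or_lt_of_le hp with hp1 | hp1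
  · -- p = 1
    have hp1' : p = 1 := hp1.symm
    subst hp1'
    rw [ENNReal.ofReal_one, one_mul]
    have h1 : eLpNorm (Vt n) 1 μ = ENNReal.ofReal (∫ ω, Vt n ω ∂μ) := by
      rw [eLpNorm_one_eq_lintegral_enorm,
        ← ofReal_integral_norm_eq_lintegral_enorm (hVt_int n)]
      congr 1
      refine integral_congr_ae ?_
      filter_upwards [hVt_nonneg] with ω hω using Real.norm_of_nonneg hω
    have h2 : eLpNorm (V n) 1 μ = ENNReal.ofReal (∫ ω, V n ω ∂μ) := by
      rw [eLpNorm_one_eq_lintegral_enorm,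
        ← ofReal_integral_norm_eq_lintegral_enorm (hint n)]
      congr 1
      exact integral_congr_ae
        (Filter.Eventually.of_forall fun ω => Real.norm_of_nonneg (hVn_nonneg ω))
    rw [h1, h2, hsum_int n]
  · -- 1 < p
    have hp0 : (0:ℝ) < p := by linarith
    have hpne0 : ENNReal.ofReal p ≠ 0 := by
      simp only [ne_eq, ENNReal.ofReal_eq_zero, not_le]; linarith
    by_cases hVp : MemLp (V n) (ENNReal.ofReal p) μ
    swap
    · have htop : eLpNorm (V n) (ENNReal.ofReal p) μ = ⊤ := by
        by_contra h
        exact hVp ⟨(hint n).aestronglyMeasurable, lt_top_iff_ne_top.2 h⟩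
      rw [htop, ENNReal.mul_top hpne0]
      exact le_top
    set q : ℝ := Real.conjExponent p with hq_def
    have hpq : p.HolderConjugate q := Real.HolderConjugate.conjExponent hp1
    have hcont_rpow : ∀ r : ℝ, 0 ≤ r → Continuous fun x : ℝ => x ^ r := fun r hr =>
      Real.continuous_rpow_const hr
    have hVnp_int : Integrable (fun ω => V n ω ^ p) μ := by
      have h := hVp.integrable_norm_rpow hpne0 ENNReal.ofReal_ne_top
      rw [ENNReal.toReal_ofReal hp0.le] at h
      refine h.congr (Filter.Eventually.of_forall fun ω => ?_)
      show ‖V n ω‖ ^ p = V n ω ^ p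
      rw [Real.norm_of_nonneg (hVn_nonneg ω)]
    set Rv : ℝ := (∫ ω, V n ω ^ p ∂μ) ^ (1 / p) with hRv_def
    have hVnp_nonneg : 0 ≤ ∫ ω, V n ω ^ p ∂μ :=
      integral_nonneg fun ω => Real.rpow_nonneg (hVn_nonneg ω) p
    have hRv0 : 0 ≤ Rv := Real.rpow_nonneg hVnp_nonneg _
    have key : ∀ M : ℝ, 0 ≤ M →
        ∫ ω, min (max (Vt n ω) 0) M ^ p ∂μ ≤ (p * Rv) ^ p := by
      intro M hM
      set B : ℕ → Ω → ℝ := fun k ω => min (max (Vt k ω) 0) M with hB_def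
      have hB_nonneg : ∀ k ω, 0 ≤ B k ω := fun k ω => le_min (le_max_right _ _) hM
      have hB_leM : ∀ k ω, B k ω ≤ M := fun k ω => min_le_right _ _
      have hB0 : ∀ ω, B 0 ω = 0 := fun ω => by
        simp [hB_def, hVt0 ω, hM]
      have hB_sm : ∀ m, StronglyMeasurable (B m) := fun m =>
        ((continuous_id.max continuous_const).min continuous_const).comp_stronglyMeasurable
          (hVt_sm m)
      have hB_sm' : ∀ k, StronglyMeasurable[𝒢 k] (B (k + 1)) := fun k =>
        ((continuous_id.max continuous_const).min continuous_const).comp_stronglyMeasurable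
          (hVt_sm' k)
      set F : ℕ → Ω → ℝ := fun k ω => B (k + 1) ω ^ (p - 1) with hF_def
      have hF_nonneg : ∀ k ω, 0 ≤ F k ω := fun k ω => Real.rpow_nonneg (hB_nonneg _ _) _
      have hF_le : ∀ k ω, F k ω ≤ M ^ (p - 1) := fun k ω =>
        Real.rpow_le_rpow (hB_nonneg _ _) (hB_leM _ _) (by linarith)
      have hF_sm' : ∀ k, StronglyMeasurable[𝒢 k] (F k) := fun k =>
        (hcont_rpow (p - 1) (by linarith)).comp_stronglyMeasurable (hB_sm' k)
      have hF_sm : ∀ k, StronglyMeasurable (F k) := fun k => (hF_sm' k).mono (𝒢.le k)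
      have hFn_sm : StronglyMeasurable fun ω => B n ω ^ (p - 1) :=
        (hcont_rpow (p - 1) (by linarith)).comp_stronglyMeasurable (hB_sm n)
      have hFn_le : ∀ ω, B n ω ^ (p - 1) ≤ M ^ (p - 1) := fun ω =>
        Real.rpow_le_rpow (hB_nonneg _ _) (hB_leM _ _) (by linarith)
      have hB_mono : ∀ᵐ ω ∂μ, ∀ j k, j ≤ k → B j ω ≤ B k ω := by
        filter_upwards [hVt_mono] with ω hω j k hjk
        exact min_le_min (max_le_max (hω j k hjk) le_rfl) le_rfl
      have hI_int : Integrable (fun ω => B n ω ^ p) μ := by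
        refine Integrable.mono' (integrable_const (M ^ p))
          (((hcont_rpow p hp0.le).comp_stronglyMeasurable (hB_sm n)).aestronglyMeasurable)
          (Filter.Eventually.of_forall fun ω => ?_)
        rw [Real.norm_of_nonneg (Real.rpow_nonneg (hB_nonneg n ω) p)]
        exact Real.rpow_le_rpow (hB_nonneg n ω) (hB_leM n ω) hp0.le
      have hterm_int : ∀ k, Integrable (fun ω => F k ω * (B (k + 1) ω - B k ω)) μ := by
        intro k
        refine Integrable.mono' (integrable_const (M ^ (p - 1) * M))
          ((hF_sm k).aestronglyMeasurable.mul
            (((hB_sm (k + 1)).sub (hB_sm k)).aestronglyMeasurable))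
          (Filter.Eventually.of_forall fun ω => ?_)
        rw [norm_mul]
        have h1 : ‖F k ω‖ ≤ M ^ (p - 1) := by
          rw [Real.norm_of_nonneg (hF_nonneg k ω)]; exact hF_le k ω
        have h2 : ‖B (k + 1) ω - B k ω‖ ≤ M := by
          rw [Real.norm_eq_abs, abs_le]
          constructor
          · have := hB_nonneg (k + 1) ω; have := hB_leM k ω; linarith
          · have := hB_leM (k + 1) ω; have := hB_nonneg k ω; linarith
        exact mul_le_mul h1 h2 (norm_nonneg _) (Real.rpow_nonneg hM _)
      have step1 : ∫ ω, B n ω ^ p ∂μ ≤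
          p * ∑ k ∈ Finset.range n, ∫ ω, F k ω * (B (k + 1) ω - B k ω) ∂μ := by
        have hmono_ae : ∀ᵐ ω ∂μ, B n ω ^ p ≤
            p * ∑ k ∈ Finset.range n, F k ω * (B (k + 1) ω - B k ω) := by
          filter_upwards [hB_mono] with ω hω
          have hseq := my_seq_rpow_le hp (fun k => B k ω) (hB0 ω)
            (fun k => hω k (k + 1) (Nat.le_succ k)) n
          calc B n ω ^ p
              ≤ p * ∑ k ∈ Finset.range n, (B (k + 1) ω - B k ω) * B (k + 1) ω ^ (p - 1) := hseq
            _ = p * ∑ k ∈ Finset.range n, F k ω * (B (k + 1) ω - B k ω) := by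
                congr 1
                exact Finset.sum_congr rfl fun k _ => by rw [hF_def]; ring
        have hrhs_int : Integrable
            (fun ω => p * ∑ k ∈ Finset.range n, F k ω * (B (k + 1) ω - B k ω)) μ :=
          (integrable_finset_sum _ fun k _ => hterm_int k).const_mul p
        calc ∫ ω, B n ω ^ p ∂μ
            ≤ ∫ ω, p * ∑ k ∈ Finset.range n, F k ω * (B (k + 1) ω - B k ω) ∂μ :=
              integral_mono_ae hI_int hrhs_int hmono_ae
          _ = p * ∑ k ∈ Finset.range n, ∫ ω, F k ω * (B (k + 1) ω - B k ω) ∂μ := by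
              rw [integral_const_mul, integral_finset_sum _ fun k _ => hterm_int k]
      have hFg_int : ∀ k, Integrable (fun ω => F k ω * g k ω) μ := fun k =>
        (hg_int k).bdd_mul (hF_sm k).aestronglyMeasurable (Filter.Eventually.of_forall fun ω => by
          rw [Real.norm_of_nonneg (hF_nonneg k ω)]; exact hF_le k ω)
      have hFd_int : ∀ k, Integrable (fun ω => F k ω * d k ω) μ := fun k =>
        (hd_int k).bdd_mul (hF_sm k).aestronglyMeasurable (Filter.Eventually.of_forall fun ω => by
          rw [Real.norm_of_nonneg (hF_nonneg k ω)]; exact hF_le k ω)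
      have step2 : ∀ k, ∫ ω, F k ω * (B (k + 1) ω - B k ω) ∂μ ≤ ∫ ω, F k ω * g k ω ∂μ := by
        intro k
        refine integral_mono_ae (hterm_int k) (hFg_int k) ?_
        filter_upwards [hVt_mono] with ω hωm
        have hlip : B (k + 1) ω - B k ω ≤ g k ω := by
          have hcl := my_clamp_sub_le (M := M) (hωm k (k + 1) (Nat.le_succ k))
          rw [hdiff k ω] at hcl
          exact hcl
        exact mul_le_mul_of_nonneg_left hlip (hF_nonneg k ω)
      have step3 : ∀ k, ∫ ω, F k ω * g k ω ∂μ = ∫ ω, F k ω * d k ω ∂μ := by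
        intro k
        have hpull : μ[F k * d k | 𝒢 k] =ᵐ[μ] F k * μ[d k | 𝒢 k] :=
          condExp_mul_of_stronglyMeasurable_left (hF_sm' k) (hFd_int k) (hd_int k)
        have h1 : ∫ ω, F k ω * d k ω ∂μ = ∫ ω, (μ[F k * d k | 𝒢 k]) ω ∂μ :=
          (integral_condExp (𝒢.le k)).symm
        have h2 : ∫ ω, (μ[F k * d k | 𝒢 k]) ω ∂μ = ∫ ω, F k ω * g k ω ∂μ :=
          integral_congr_ae hpull
        exact (h1.trans h2).symm
      have hFnd_int : ∀ k, Integrable (fun ω => B n ω ^ (p - 1) * d k ω) μ := fun k =>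
        (hd_int k).bdd_mul hFn_sm.aestronglyMeasurable (Filter.Eventually.of_forall fun ω => by
          rw [Real.norm_of_nonneg (Real.rpow_nonneg (hB_nonneg n ω) _)]; exact hFn_le ω)
      have step4 : ∀ k ∈ Finset.range n,
          ∫ ω, F k ω * d k ω ∂μ ≤ ∫ ω, B n ω ^ (p - 1) * d k ω ∂μ := by
        intro k hk
        refine integral_mono_ae (hFd_int k) (hFnd_int k) ?_
        filter_upwards [hB_mono] with ω hω
        refine mul_le_mul_of_nonneg_right ?_ (hd_nonneg k ω)
        exact Real.rpow_le_rpow (hB_nonneg _ _) (hω (k + 1) n (Finset.mem_range.mp hk))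
          (by linarith)
      have step5 : ∑ k ∈ Finset.range n, ∫ ω, B n ω ^ (p - 1) * d k ω ∂μ
          = ∫ ω, V n ω * B n ω ^ (p - 1) ∂μ := by
        rw [← integral_finset_sum _ fun k _ => hFnd_int k]
        refine integral_congr_ae (Filter.Eventually.of_forall fun ω => ?_)
        show ∑ k ∈ Finset.range n, B n ω ^ (p - 1) * d k ω = V n ω * B n ω ^ (p - 1)
        rw [← Finset.mul_sum]
        have hds : ∑ k ∈ Finset.range n, d k ω = V n ω := by
          show ∑ k ∈ Finset.range n, (V (k + 1) ω - V k ω) = V n ω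
          rw [Finset.sum_range_sub (fun k => V k ω)]
          simp [congrFun h0 ω]
        rw [hds, mul_comm]
      have hFn_memLq : MemLp (fun ω => B n ω ^ (p - 1)) (ENNReal.ofReal q) μ :=
        MemLp.of_bound hFn_sm.aestronglyMeasurable (M ^ (p - 1))
          (Filter.Eventually.of_forall fun ω => by
            rw [Real.norm_of_nonneg (Real.rpow_nonneg (hB_nonneg n ω) _)]; exact hFn_le ω)
      set I : ℝ := ∫ ω, B n ω ^ p ∂μ with hI_def
      have hI0 : 0 ≤ I := integral_nonneg fun ω => Real.rpow_nonneg (hB_nonneg n ω) p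
      have step6 : ∫ ω, V n ω * B n ω ^ (p - 1) ∂μ ≤ Rv * I ^ (1 / q) := by
        have hHolder := integral_mul_le_Lp_mul_Lq_of_nonneg hpq
          (Filter.Eventually.of_forall hVn_nonneg)
          (Filter.Eventually.of_forall fun ω => Real.rpow_nonneg (hB_nonneg n ω) (p - 1))
          hVp hFn_memLq
        have hqq : ∫ ω, (B n ω ^ (p - 1)) ^ q ∂μ = I := by
          rw [hI_def]
          refine integral_congr_ae (Filter.Eventually.of_forall fun ω => ?_)
          show (B n ω ^ (p - 1)) ^ q = B n ω ^ p
          rw [← Real.rpow_mul (hB_nonneg n ω), hpq.sub_one_mul_conj]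
        calc ∫ ω, V n ω * B n ω ^ (p - 1) ∂μ
            ≤ (∫ ω, V n ω ^ p ∂μ) ^ (1 / p) * (∫ ω, (B n ω ^ (p - 1)) ^ q ∂μ) ^ (1 / q) :=
              hHolder
          _ = Rv * I ^ (1 / q) := by rw [hqq, ← hRv_def]
      have hchain : I ≤ p * (Rv * I ^ (1 / q)) := by
        calc I ≤ p * ∑ k ∈ Finset.range n, ∫ ω, F k ω * (B (k + 1) ω - B k ω) ∂μ := step1
          _ ≤ p * (Rv * I ^ (1 / q)) := by
              refine mul_le_mul_of_nonneg_left ?_ hp0.le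
              calc ∑ k ∈ Finset.range n, ∫ ω, F k ω * (B (k + 1) ω - B k ω) ∂μ
                  ≤ ∑ k ∈ Finset.range n, ∫ ω, F k ω * d k ω ∂μ :=
                    Finset.sum_le_sum fun k _ => (step2 k).trans_eq (step3 k)
                _ ≤ ∑ k ∈ Finset.range n, ∫ ω, B n ω ^ (p - 1) * d k ω ∂μ :=
                    Finset.sum_le_sum step4
                _ = ∫ ω, V n ω * B n ω ^ (p - 1) ∂μ := step5
                _ ≤ Rv * I ^ (1 / q) := step6
      show I ≤ (p * Rv) ^ p
      rcases hI0.eq_or_lt with hI | hI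
      · rw [← hI]
        exact Real.rpow_nonneg (by positivity) p
      · have hIq : 0 < I ^ (1 / q) := Real.rpow_pos_of_pos hI _
        have hsum1 : 1 / p + 1 / q = 1 := by
          rw [one_div, one_div]; exact hpq.inv_add_inv_eq_one
        have h1p : I ^ (1 / p) * I ^ (1 / q) = I := by
          rw [← Real.rpow_add hI, hsum1, Real.rpow_one]
        have hdiv : I ^ (1 / p) ≤ p * Rv := by
          refine le_of_mul_le_mul_right ?_ hIq
          rw [h1p]
          calc I ≤ p * (Rv * I ^ (1 / q)) := hchain
            _ = p * Rv * I ^ (1 / q) := by ring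
        have h2 := Real.rpow_le_rpow (Real.rpow_nonneg hI0 _) hdiv hp0.le
        have h3 : (I ^ (1 / p)) ^ p = I := by
          rw [← Real.rpow_mul hI0, one_div_mul_cancel hp0.ne', Real.rpow_one]
        rwa [h3] at h2
    -- pass to the limit M → ∞
    set h : ℕ → Ω → ℝ≥0∞ := fun M ω => ENNReal.ofReal (min (max (Vt n ω) 0) (M:ℝ) ^ p)
      with hh_def
    have hclamp_nonneg : ∀ (M : ℝ), 0 ≤ M → ∀ ω, 0 ≤ min (max (Vt n ω) 0) M :=
      fun M hM ω => le_min (le_max_right _ _) hM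
    have hh_meas : ∀ M : ℕ, AEMeasurable (h M) μ := by
      intro M
      have hc : Continuous fun x : ℝ => ENNReal.ofReal (min (max x 0) (M:ℝ) ^ p) :=
        ENNReal.continuous_ofReal.comp ((hcont_rpow p hp0.le).comp
          (((continuous_id.max continuous_const).min continuous_const)))
      exact (hc.comp_stronglyMeasurable (hVt_sm n)).measurable.aemeasurable
    have hh_mono : ∀ ω, Monotone fun M : ℕ => h M ω := by
      intro ω M M' hMM'
      refine ENNReal.ofReal_le_ofReal (Real.rpow_le_rpow
        (hclamp_nonneg M (Nat.cast_nonneg M) ω)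
        (min_le_min le_rfl (Nat.cast_le.2 hMM')) hp0.le)
    have hlim : ∀ᵐ ω ∂μ, (⨆ M : ℕ, h M ω) = (‖Vt n ω‖₊ : ℝ≥0∞) ^ p := by
      filter_upwards [hVt_nonneg] with ω hω
      obtain ⟨m, hm⟩ := exists_nat_ge (Vt n ω)
      have hxmax : max (Vt n ω) 0 = Vt n ω := max_eq_left hω
      have hnorm : (‖Vt n ω‖₊ : ℝ≥0∞) ^ p = ENNReal.ofReal (Vt n ω ^ p) := by
        rw [← enorm_eq_nnnorm, Real.enorm_eq_ofReal hω, ENNReal.ofReal_rpow_of_nonneg hω hp0.le]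
      rw [hnorm]
      apply le_antisymm
      · refine iSup_le fun M => ENNReal.ofReal_le_ofReal ?_
        refine Real.rpow_le_rpow (hclamp_nonneg M (Nat.cast_nonneg M) ω) ?_ hp0.le
        rw [hxmax] at *
        exact min_le_left _ _
      · refine le_iSup_of_le m (le_of_eq ?_)
        simp only [hh_def, hxmax, min_eq_left hm]
    have hmain : ∫⁻ ω, (‖Vt n ω‖₊ : ℝ≥0∞) ^ p ∂μ ≤ ENNReal.ofReal ((p * Rv) ^ p) := by
      have h1 : ∫⁻ ω, (‖Vt n ω‖₊ : ℝ≥0∞) ^ p ∂μ = ∫⁻ ω, ⨆ M : ℕ, h M ω ∂μ :=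
        lintegral_congr_ae (hlim.mono fun ω hω => hω.symm)
      rw [h1, lintegral_iSup' hh_meas (Filter.Eventually.of_forall hh_mono)]
      refine iSup_le fun M => ?_
      have hBM_sm : StronglyMeasurable fun ω => min (max (Vt n ω) 0) (M:ℝ) ^ p :=
        ((hcont_rpow p hp0.le).comp
          ((continuous_id.max continuous_const).min continuous_const)).comp_stronglyMeasurable
          (hVt_sm n)
      have hint_BM : Integrable (fun ω => min (max (Vt n ω) 0) (M:ℝ) ^ p) μ := by
        refine Integrable.mono' (integrable_const ((M:ℝ) ^ p))
          hBM_sm.aestronglyMeasurable (Filter.Eventually.of_forall fun ω => ?_)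
        rw [Real.norm_of_nonneg (Real.rpow_nonneg (hclamp_nonneg M (Nat.cast_nonneg M) ω) p)]
        exact Real.rpow_le_rpow (hclamp_nonneg M (Nat.cast_nonneg M) ω) (min_le_right _ _) hp0.le
      have heq : ∫⁻ ω, h M ω ∂μ
          = ENNReal.ofReal (∫ ω, min (max (Vt n ω) 0) (M:ℝ) ^ p ∂μ) := by
        rw [ofReal_integral_eq_lintegral_ofReal hint_BM (Filter.Eventually.of_forall fun ω =>
          Real.rpow_nonneg (hclamp_nonneg M (Nat.cast_nonneg M) ω) p)]
      rw [heq]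
      exact ENNReal.ofReal_le_ofReal (key (M:ℝ) (Nat.cast_nonneg M))
    have heLp : eLpNorm (Vt n) (ENNReal.ofReal p) μ ≤ ENNReal.ofReal (p * Rv) := by
      rw [eLpNorm_eq_lintegral_rpow_enorm_toReal hpne0 ENNReal.ofReal_ne_top,
        ENNReal.toReal_ofReal hp0.le]
      calc (∫⁻ ω, (‖Vt n ω‖₊ : ℝ≥0∞) ^ p ∂μ) ^ (1 / p)
          ≤ (ENNReal.ofReal ((p * Rv) ^ p)) ^ (1 / p) :=
            ENNReal.rpow_le_rpow hmain (by positivity)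
        _ = ENNReal.ofReal (p * Rv) := by
            rw [ENNReal.ofReal_rpow_of_nonneg (by positivity : (0:ℝ) ≤ (p * Rv) ^ p)
              (by positivity : (0:ℝ) ≤ 1 / p)]
            congr 1
            rw [← Real.rpow_mul (by positivity), mul_one_div, div_self hp0.ne', Real.rpow_one]
    have hRv_eq : ENNReal.ofReal Rv = eLpNorm (V n) (ENNReal.ofReal p) μ := by
      rw [eLpNorm_eq_lintegral_rpow_enorm_toReal hpne0 ENNReal.ofReal_ne_top,
        ENNReal.toReal_ofReal hp0.le]
      have hVl : ∫⁻ ω, (‖V n ω‖₊ : ℝ≥0∞) ^ p ∂μ = ENNReal.ofReal (∫ ω, V n ω ^ p ∂μ) := by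
        rw [ofReal_integral_eq_lintegral_ofReal hVnp_int (Filter.Eventually.of_forall fun ω =>
          Real.rpow_nonneg (hVn_nonneg ω) p)]
        refine lintegral_congr fun ω => ?_
        rw [← enorm_eq_nnnorm, Real.enorm_eq_ofReal (hVn_nonneg ω), ENNReal.ofReal_rpow_of_nonneg (hVn_nonneg ω) hp0.le]
      rw [show (∫⁻ x, ‖V n x‖ₑ ^ p ∂μ) = _ from hVl, ENNReal.ofReal_rpow_of_nonneg hVnp_nonneg (by positivity : (0:ℝ) ≤ 1 / p)]
    calc eLpNorm (Vt n) (ENNReal.ofReal p) μ ≤ ENNReal.ofReal (p * Rv) := heLp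
      _ = ENNReal.ofReal p * ENNReal.ofReal Rv := ENNReal.ofReal_mul hp0.le
      _ = ENNReal.ofReal p * eLpNorm (V n) (ENNReal.ofReal p) μ := by rw [hRv_eq]
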